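/- Let n be a positive integer, κ > 0 a real number, and let (y_i, x_i) ∈ ℝ × ℝ for i = 1, …, n satisfy y_i ≥ 0 for all i, x_i > 0 for at least one i, and x_j < 0 for at least one j. Define g(θ) = ∑_{i=1}^n (y_i − exp(θ·x_i))·exp(κ·θ·x_i)·x_i for θ ∈ ℝ. Then g is continuous, g(θ) → −∞ as θ → +∞, and g(θ) → +∞ as θ → −∞; in particular, g has a root, and the set of roots of g is bounded. -/

import Mathlib

open Real Filter

/-- Generic single-term limit: if `θ * x → +∞` along `l`, the factor
`(c - exp (θ*x)) * exp (κ*(θ*x))` tends to `-∞`. -/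
private lemma pml_factor_atBot {κ c x : ℝ} (hκ : 0 < κ) {l : Filter ℝ}
    (h1 : Tendsto (fun θ : ℝ => θ * x) l atTop) :
    Tendsto (fun θ : ℝ => (c - Real.exp (θ * x)) * Real.exp (κ * (θ * x))) l atBot := by
  have he : Tendsto (fun θ : ℝ => Real.exp (θ * x)) l atTop :=
    Real.tendsto_exp_atTop.comp h1
  have hk : Tendsto (fun θ : ℝ => Real.exp (κ * (θ * x))) l atTop :=
    Real.tendsto_exp_atTop.comp (h1.const_mul_atTop hκ)
  have hsub : Tendsto (fun θ : ℝ => c - Real.exp (θ * x)) l atBot := by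
    simpa [sub_eq_add_neg] using tendsto_atBot_add_const_left l c
      (tendsto_neg_atTop_atBot.comp he)
  exact hsub.atBot_mul_atTop₀ hk

private lemma pml_term_zero {κ c x : ℝ} (hκ : 0 < κ) {l : Filter ℝ}
    (h1 : Tendsto (fun θ : ℝ => θ * x) l atBot) :
    Tendsto (fun θ : ℝ => (c - Real.exp (θ * x)) * Real.exp (κ * (θ * x)) * x) l (nhds 0) := by
  have he : Tendsto (fun θ : ℝ => Real.exp (θ * x)) l (nhds 0) :=
    Real.tendsto_exp_atBot.comp h1
  have hk : Tendsto (fun θ : ℝ => Real.exp (κ * (θ * x))) l (nhds 0) :=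
    Real.tendsto_exp_atBot.comp (h1.const_mul_atBot hκ)
  have h2 : Tendsto (fun θ : ℝ => (c - Real.exp (θ * x)) * Real.exp (κ * (θ * x)) * x) l
      (nhds ((c - 0) * 0 * x)) := ((tendsto_const_nhds.sub he).mul hk).mul_const x
  simpa using h2

private lemma pml_sum_atBot {ι : Type*} {s : Finset ι} (hs : s.Nonempty) {f : ι → ℝ → ℝ}
    {l : Filter ℝ} (h : ∀ i ∈ s, Tendsto (fun θ => f i θ) l atBot) :
    Tendsto (fun θ => ∑ i ∈ s, f i θ) l atBot := by
  induction s using Finset.cons_induction with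
  | empty => exact absurd hs (by simp)
  | cons a s ha ih =>
    rcases s.eq_empty_or_nonempty with rfl | hs'
    · simpa using h a (by simp)
    · have := Tendsto.atBot_add_atBot (h a (Finset.mem_cons_self a s))
        (ih hs' fun i hi => h i (Finset.mem_cons_of_mem hi))
      simpa [Finset.sum_cons] using this

theorem generalized_pml_estimating_function_root (n : ℕ) (hn : 0 < n)
    (κ : ℝ) (hκ : 0 < κ)
    (y x : Fin n → ℝ) (hy : ∀ i, 0 ≤ y i)
    (hpos : ∃ i, 0 < x i) (hneg : ∃ j, x j < 0) :
    Continuous (fun θ : ℝ =>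
      ∑ i, (y i - Real.exp (θ * x i)) * Real.exp (κ * (θ * x i)) * x i) ∧
    Tendsto (fun θ : ℝ =>
      ∑ i, (y i - Real.exp (θ * x i)) * Real.exp (κ * (θ * x i)) * x i) atTop atBot ∧
    Tendsto (fun θ : ℝ =>
      ∑ i, (y i - Real.exp (θ * x i)) * Real.exp (κ * (θ * x i)) * x i) atBot atTop ∧
    (∃ θ : ℝ, ∑ i, (y i - Real.exp (θ * x i)) * Real.exp (κ * (θ * x i)) * x i = 0) ∧
    Bornology.IsBounded {θ : ℝ |
      ∑ i, (y i - Real.exp (θ * x i)) * Real.exp (κ * (θ * x i)) * x i = 0} := by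
  set g : ℝ → ℝ := fun θ => ∑ i, (y i - Real.exp (θ * x i)) * Real.exp (κ * (θ * x i)) * x i
    with hg
  have hcont : Continuous g := by
    apply continuous_finset_sum
    intro i _
    fun_prop
  -- tendsto at +∞
  have hTop : Tendsto g atTop atBot := by
    have hsplit : g = fun θ =>
        (∑ i ∈ Finset.univ.filter (fun i => ¬ 0 < x i),
          (y i - Real.exp (θ * x i)) * Real.exp (κ * (θ * x i)) * x i) +
        (∑ i ∈ Finset.univ.filter (fun i => 0 < x i),
          (y i - Real.exp (θ * x i)) * Real.exp (κ * (θ * x i)) * x i) := by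
      funext θ
      rw [hg, add_comm]
      exact (Finset.sum_filter_add_sum_filter_not Finset.univ (fun i => 0 < x i) _).symm
    rw [hsplit]
    have hB : Tendsto (fun θ => ∑ i ∈ Finset.univ.filter (fun i => ¬ 0 < x i),
        (y i - Real.exp (θ * x i)) * Real.exp (κ * (θ * x i)) * x i) atTop (nhds 0) := by
      have h0 : Tendsto (fun θ => ∑ i ∈ Finset.univ.filter (fun i => ¬ 0 < x i),
          (y i - Real.exp (θ * x i)) * Real.exp (κ * (θ * x i)) * x i) atTop
          (nhds (∑ i ∈ Finset.univ.filter (fun i => ¬ 0 < x i), (0 : ℝ))) := by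
        refine tendsto_finset_sum _ ?_
        intro i hi
        simp only [Finset.mem_filter, not_lt] at hi
        rcases lt_or_eq_of_le hi.2 with hlt | heq
        · exact pml_term_zero hκ (tendsto_id.atTop_mul_const_of_neg hlt)
        · simp [heq]
      simpa using h0
    have hA : Tendsto (fun θ => ∑ i ∈ Finset.univ.filter (fun i => 0 < x i),
        (y i - Real.exp (θ * x i)) * Real.exp (κ * (θ * x i)) * x i) atTop atBot := by
      obtain ⟨i0, hi0⟩ := hpos
      refine pml_sum_atBot ⟨i0, by simp [hi0]⟩ ?_
      intro i hi
      simp only [Finset.mem_filter] at hi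
      exact (pml_factor_atBot hκ (tendsto_id.atTop_mul_const hi.2)).atBot_mul_const hi.2
    exact hB.add_atBot hA
  -- tendsto at -∞
  have hBot : Tendsto g atBot atTop := by
    have hsplit : g = fun θ =>
        (∑ i ∈ Finset.univ.filter (fun i => ¬ x i < 0),
          (y i - Real.exp (θ * x i)) * Real.exp (κ * (θ * x i)) * x i) +
        (∑ i ∈ Finset.univ.filter (fun i => x i < 0),
          (y i - Real.exp (θ * x i)) * Real.exp (κ * (θ * x i)) * x i) := by
      funext θ
      rw [hg, add_comm]
      exact (Finset.sum_filter_add_sum_filter_not Finset.univ (fun i => x i < 0) _).symm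
    rw [hsplit]
    have hB : Tendsto (fun θ => ∑ i ∈ Finset.univ.filter (fun i => ¬ x i < 0),
        (y i - Real.exp (θ * x i)) * Real.exp (κ * (θ * x i)) * x i) atBot (nhds 0) := by
      have h0 : Tendsto (fun θ => ∑ i ∈ Finset.univ.filter (fun i => ¬ x i < 0),
          (y i - Real.exp (θ * x i)) * Real.exp (κ * (θ * x i)) * x i) atBot
          (nhds (∑ i ∈ Finset.univ.filter (fun i => ¬ x i < 0), (0 : ℝ))) := by
        refine tendsto_finset_sum _ ?_
        intro i hi
        simp only [Finset.mem_filter, not_lt] at hi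
        rcases lt_or_eq_of_le hi.2 with hlt | heq
        · exact pml_term_zero hκ (tendsto_id.atBot_mul_const hlt)
        · simp [← heq]
      simpa using h0
    have hA : Tendsto (fun θ => ∑ i ∈ Finset.univ.filter (fun i => x i < 0),
        (y i - Real.exp (θ * x i)) * Real.exp (κ * (θ * x i)) * x i) atBot atTop := by
      obtain ⟨j0, hj0⟩ := hneg
      have hneg' : Tendsto (fun θ => ∑ i ∈ Finset.univ.filter (fun i => x i < 0),
          -((y i - Real.exp (θ * x i)) * Real.exp (κ * (θ * x i)) * x i)) atBot atBot := by
        refine pml_sum_atBot ⟨j0, by simp [hj0]⟩ ?_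
        intro i hi
        simp only [Finset.mem_filter] at hi
        have h1 : Tendsto (fun θ : ℝ => θ * x i) atBot atTop :=
          tendsto_id.atBot_mul_const_of_neg hi.2
        have := (pml_factor_atBot (c := y i) hκ h1).atBot_mul_const (neg_pos.mpr hi.2)
        simpa [mul_neg, neg_neg] using this
      have := tendsto_neg_atBot_atTop.comp hneg'
      simpa [Function.comp_def, Finset.sum_neg_distrib] using this
    exact hB.add_atTop hA
  refine ⟨hcont, hTop, hBot, ?_, ?_⟩
  · obtain ⟨θ, hθ⟩ := (Continuous.surjective' hcont hBot hTop) 0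
    exact ⟨θ, hθ⟩
  · have h1 := (hTop.eventually (eventually_lt_atBot (0 : ℝ)))
    rw [eventually_atTop] at h1
    obtain ⟨M, hM⟩ := h1
    have h2 := (hBot.eventually (eventually_gt_atTop (0 : ℝ)))
    rw [eventually_atBot] at h2
    obtain ⟨m, hm⟩ := h2
    refine (Metric.isBounded_Icc m M).subset ?_
    intro θ hθ
    simp only [Set.mem_setOf_eq] at hθ
    constructor
    · by_contra h
      push_neg at h
      exact absurd hθ (ne_of_gt (hm θ h.le))
    · by_contra h
      push_neg at h
      exact absurd hθ (ne_of_lt (hM θ h.le))
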